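/- Let G be a finite group and B a G-invariant set of 3-element subsets of G satisfying the matroid basis exchange axiom. If f_{g,gh} ⊆ B then f_{g,g⁻¹} ⊆ B or f_{g,h} ⊆ B. -/

import Mathlib

/-- The orbit `f_{g,h} = {{a, a*g, a*h} : a ∈ G}`. -/
def tripleOrbit {G : Type*} [Group G] [DecidableEq G] (g h : G) : Set (Finset G) :=
  {s | ∃ a : G, s = {a, a * g, a * h}}

/-- `B` is invariant under the left multiplication action of `G` on subsets. -/
def LeftInvariant {G : Type*} [Group G] [DecidableEq G] (B : Set (Finset G)) : Prop :=
  ∀ g : G, ∀ s ∈ B, s.image (fun x => g * x) ∈ B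

/-- The (strong) matroid basis exchange axiom. -/
def ExchangeAxiom {α : Type*} [DecidableEq α] (B : Set (Finset α)) : Prop :=
  ∀ X ∈ B, ∀ Y ∈ B, ∀ x ∈ X, x ∉ Y → ∃ y ∈ Y, y ∉ X ∧ insert y (X.erase x) ∈ B

lemma orbit_sub {G : Type*} [Group G] [DecidableEq G] (B : Set (Finset G))
    (hinv : LeftInvariant B) (g k : G) (hmem : ({1, g, k} : Finset G) ∈ B) :
    tripleOrbit g k ⊆ B := by
  rintro s ⟨a, rfl⟩
  simpa [Finset.image_insert, mul_one] using hinv a _ hmem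

/-- If `f_{g,g*h} ⊆ B` then `f_{g,g⁻¹} ⊆ B` or `f_{g,h} ⊆ B`. -/
theorem stmt_12 {G : Type*} [Group G] [Fintype G] [DecidableEq G]
    (B : Set (Finset G)) (hcard : ∀ s ∈ B, s.card = 3)
    (hinv : LeftInvariant B) (hexch : ExchangeAxiom B)
    (g h : G) (hg : g ≠ 1) (hh : h ≠ 1) (hgh : g * h ≠ 1)
    (h1 : tripleOrbit g (g * h) ⊆ B) :
    tripleOrbit g g⁻¹ ⊆ B ∨ tripleOrbit g h ⊆ B := by
  have hX : ({1, g, g * h} : Finset G) ∈ B := by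
    apply h1; exact ⟨1, by simp⟩
  by_cases hcase : g * h = g⁻¹
  · left
    exact orbit_sub B hinv g g⁻¹ (by rwa [hcase] at hX)
  · have hY : ({g⁻¹, 1, h} : Finset G) ∈ B := by
      have := hinv g⁻¹ _ hX
      simpa [Finset.image_insert, mul_one] using this
    have hghY : g * h ∉ ({g⁻¹, 1, h} : Finset G) := by
      simp only [Finset.mem_insert, Finset.mem_singleton]
      push_neg
      exact ⟨hcase, hgh, fun e => hg (mul_eq_right.mp e)⟩
    obtain ⟨y, hyY, hyX, hB⟩ := hexch _ hX _ hY (g * h) (by simp) hghY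
    have herase : (({1, g, g * h} : Finset G).erase (g * h)) = {1, g} := by
      ext x
      simp only [Finset.mem_erase, Finset.mem_insert, Finset.mem_singleton]
      constructor
      · rintro ⟨hx, h1 | h2 | h3⟩
        · exact Or.inl h1
        · exact Or.inr h2
        · exact absurd h3 hx
      · rintro (rfl | rfl)
        · exact ⟨fun e => hgh e.symm, Or.inl rfl⟩
        · exact ⟨fun e => hh (mul_eq_left.mp e.symm), Or.inr (Or.inl rfl)⟩
    rw [herase] at hB
    simp only [Finset.mem_insert, Finset.mem_singleton] at hyY
    have hy1 : y ≠ 1 := by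
      intro rfl'; apply hyX; simp [rfl']
    have hmem : ({1, g, y} : Finset G) ∈ B := by
      have : ({1, g, y} : Finset G) = insert y ({1, g} : Finset G) := by
        ext x; simp; tauto
      rwa [this]
    rcases hyY with rfl | rfl | rfl
    · left; exact orbit_sub B hinv g _ hmem
    · exact absurd rfl hy1
    · right; exact orbit_sub B hinv g _ hmem
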